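/- Let H be a factorial commutative cancellative monoid and M a submonoid of H containing every unit of H. Then every element of M that is square-free in M is square-free in H, if and only if, for every n ≥ 1 and square-free elements s₁,…,sₙ ∈ H that are pairwise relatively prime in H, s₁·s₂²·s₃³·⋯·sₙⁿ ∈ M implies s₁,…,sₙ ∈ M. -/

import Mathlib

namespace SF11

variable {H : Type*} [CancelCommMonoid H]

/-- prime predicate in a monoid without zero -/
def IsP (p : H) : Prop := ¬ IsUnit p ∧ ∀ b c : H, p ∣ b * c → p ∣ b ∨ p ∣ c

theorem IsP.dvd_of_dvd_pow {p x : H} (hp : IsP p) : ∀ {k : ℕ}, p ∣ x ^ k → p ∣ x := by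
  intro k
  induction k with
  | zero => intro h; exact absurd (isUnit_of_dvd_one (by simpa using h)) hp.1
  | succ n ih =>
    intro h
    rw [pow_succ] at h
    rcases hp.2 _ _ h with h1 | h2
    · exact ih h1
    · exact h2

theorem IsP.dvd_prod {p : H} (hp : IsP p) {l : Multiset H} (h : p ∣ l.prod) :
    ∃ q ∈ l, p ∣ q := by
  induction l using Multiset.induction_on with
  | empty => exact absurd (isUnit_of_dvd_one (by simpa using h)) hp.1
  | cons a s ih =>
    rw [Multiset.prod_cons] at h
    rcases hp.2 _ _ h with h1 | h2
    · exact ⟨a, Multiset.mem_cons_self a s, h1⟩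
    · obtain ⟨q, hq, hq2⟩ := ih h2
      exact ⟨q, Multiset.mem_cons_of_mem hq, hq2⟩

theorem IsP.dvd_finsetprod {p : H} (hp : IsP p) {ι : Type*} {t : Finset ι} {f : ι → H}
    (h : p ∣ ∏ i ∈ t, f i) : ∃ i ∈ t, p ∣ f i := by
  classical
  induction t using Finset.induction_on with
  | empty => exact absurd (isUnit_of_dvd_one (by simpa using h)) hp.1
  | insert a s hni ih =>
    rw [Finset.prod_insert hni] at h
    rcases hp.2 _ _ h with h1 | h2
    · exact ⟨a, Finset.mem_insert_self a s, h1⟩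
    · obtain ⟨i, hi, hi2⟩ := ih h2
      exact ⟨i, Finset.mem_insert_of_mem hi, hi2⟩

theorem IsP.assoc {p q : H} (hp : IsP p) (hq : IsP q) (h : p ∣ q) : Associated p q := by
  obtain ⟨c, rfl⟩ := h
  rcases hq.2 p c dvd_rfl with h1 | h2
  · obtain ⟨d, hd⟩ := h1
    refine associated_mul_unit_right p c (IsUnit.of_mul_eq_one (a := c) d ?_)
    have h2 : p * 1 = p * (c * d) := by rw [mul_one, ← mul_assoc, ← hd]
    exact (mul_left_cancel h2).symm
  · obtain ⟨e, he⟩ := h2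
    exfalso
    apply hp.1
    have h2 : c * 1 = c * (e * p) := by
      rw [mul_one]; nth_rewrite 1 [he]; ac_rfl
    exact IsUnit.of_mul_eq_one (a := p) e (by rw [mul_comm]; exact (mul_left_cancel h2).symm)

variable (hfact : ∀ a : H, IsUnit a ∨ ∃ l : Multiset H, (∀ p ∈ l, IsP p) ∧ l.prod = a)

include hfact in
theorem exists_pfactor {x : H} (hx : ¬ IsUnit x) : ∃ p, IsP p ∧ p ∣ x := by
  rcases hfact x with h | ⟨l, hl, rfl⟩
  · exact absurd h hx
  · rcases l.empty_or_exists_mem with rfl | ⟨p, hp⟩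
    · simp at hx
    · exact ⟨p, hl p hp, Multiset.dvd_prod hp⟩

include hfact in
theorem relprime_of_no_common {x y : H}
    (h : ∀ p, IsP p → p ∣ x → p ∣ y → False) : IsRelPrime x y := by
  intro d hdx hdy
  by_contra hd
  obtain ⟨p, hp, hpd⟩ := exists_pfactor hfact hd
  exact h p hp (hpd.trans hdx) (hpd.trans hdy)

theorem IsP.squarefree {p : H} (hp : IsP p) : Squarefree p := by
  intro x hx
  obtain ⟨c, hc⟩ := hx
  rcases hp.2 x (x * c) (by rw [← mul_assoc, ← hc]) with h1 | h2
  · obtain ⟨t, ht⟩ := h1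
    have key : p * (x * (c * t)) = p * 1 := by
      calc p * (x * (c * t)) = (p * t) * (x * c) := by ac_rfl
        _ = x * (x * c) := by rw [← ht]
        _ = p * 1 := by rw [mul_one, hc, mul_assoc]
    exact IsUnit.of_mul_eq_one (a := x) (c * t) (mul_left_cancel key)
  · obtain ⟨t, ht⟩ := h2
    have key : p * (x * t) = p * 1 := by
      calc p * (x * t) = x * (p * t) := by ac_rfl
        _ = x * (x * c) := by rw [← ht]
        _ = p * 1 := by rw [mul_one, hc, mul_assoc]
    exact IsUnit.of_mul_eq_one (a := x) t (mul_left_cancel key)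

theorem IsP.relprime_of_not_dvd {p x : H} (hp : IsP p) (h : ¬ p ∣ x) : IsRelPrime p x := by
  intro d hdp hdx
  obtain ⟨e, he⟩ := hdp
  rcases hp.2 d e (by rw [← he]) with h1 | h2
  · exact absurd (h1.trans hdx) h
  · obtain ⟨t, ht⟩ := h2
    have key : p * (d * t) = p * 1 := by
      calc p * (d * t) = d * (p * t) := by ac_rfl
        _ = d * e := by rw [← ht]
        _ = p * 1 := by rw [mul_one, he]
    exact IsUnit.of_mul_eq_one (a := d) t (mul_left_cancel key)

include hfact in
theorem sqmul {x y : H} (hx : Squarefree x) (hy : Squarefree y) (hxy : IsRelPrime x y) :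
    Squarefree (x * y) := by
  intro z hz
  by_contra hzu
  obtain ⟨p, hp, hpz⟩ := exists_pfactor hfact hzu
  have hpp : p * p ∣ x * y := (mul_dvd_mul hpz hpz).trans hz
  have key : ∀ a b : H, Squarefree a → ¬ p ∣ b → p ∣ a → ¬ (p * p ∣ a * b) := by
    intro a b ha hpb hpa hdd
    obtain ⟨a', rfl⟩ := hpa
    have hpa' : ¬ p ∣ a' := fun hd => hp.1 (ha p (mul_dvd_mul_left p hd))
    obtain ⟨w, hw⟩ := hdd
    have heq : p * (a' * b) = p * (p * w) := by rw [← mul_assoc, hw, mul_assoc]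
    rcases hp.2 _ _ (⟨w, mul_left_cancel heq⟩ : p ∣ a' * b) with hcase | hcase
    · exact hpa' hcase
    · exact hpb hcase
  rcases hp.2 x y ((hpz.trans (dvd_mul_right z z)).trans hz) with h | h
  · have hpy : ¬ p ∣ y := fun hd => hp.1 (hxy h hd)
    exact key x y hx hpy h hpp
  · have hpx : ¬ p ∣ x := fun hd => hp.1 (hxy hd h)
    exact key y x hy hpx h (by rwa [mul_comm x y] at hpp)

include hfact in
theorem sq_finsetprod {ι : Type*} {t : Finset ι} {f : ι → H}
    (hsf : ∀ i ∈ t, Squarefree (f i))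
    (hcop : ∀ i ∈ t, ∀ j ∈ t, i ≠ j → IsRelPrime (f i) (f j)) :
    Squarefree (∏ i ∈ t, f i) := by
  classical
  induction t using Finset.induction_on with
  | empty => simpa using squarefree_one
  | insert a s hni ih =>
    rw [Finset.prod_insert hni]
    refine sqmul hfact (hsf a (Finset.mem_insert_self a s))
      (ih (fun i hi => hsf i (Finset.mem_insert_of_mem hi))
          (fun i hi j hj hij => hcop i (Finset.mem_insert_of_mem hi) j (Finset.mem_insert_of_mem hj) hij)) ?_
    refine relprime_of_no_common hfact ?_
    intro q hq hqa hqprod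
    obtain ⟨i, hi, hqi⟩ := hq.dvd_finsetprod hqprod
    exact hq.1 (hcop a (Finset.mem_insert_self a s) i (Finset.mem_insert_of_mem hi)
      (fun h => hni (h ▸ hi)) hqa hqi)

include hfact in
theorem rp_mul_mul {a b c d : H} (h1 : IsRelPrime a c) (h2 : IsRelPrime a d)
    (h3 : IsRelPrime b c) (h4 : IsRelPrime b d) : IsRelPrime (a * b) (c * d) := by
  refine relprime_of_no_common hfact ?_
  intro q hq hq1 hq2
  rcases hq.2 _ _ hq1 with ha | hb <;> rcases hq.2 _ _ hq2 with hc | hd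
  · exact hq.1 (h1 ha hc)
  · exact hq.1 (h2 ha hd)
  · exact hq.1 (h3 hb hc)
  · exact hq.1 (h4 hb hd)

theorem mem_of_assoc {M : Submonoid H} (hunits : ∀ u : H, IsUnit u → u ∈ M)
    {x y : H} (hx : x ∈ M) (h : Associated x y) : y ∈ M := by
  obtain ⟨u, rfl⟩ := h
  exact M.mul_mem hx (hunits _ u.isUnit)

theorem sf_assoc {x y : H} (h : Associated x y) (hx : Squarefree x) : Squarefree y :=
  fun z hz => hx z (hz.trans h.symm.dvd)

theorem assoc_cancel {p x y : H} (h : Associated (p * x) (p * y)) : Associated x y := by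
  obtain ⟨u, hu⟩ := h
  exact ⟨u, mul_left_cancel (by rw [← mul_assoc, hu])⟩

theorem card_unique : ∀ (l : Multiset H), (∀ p ∈ l, IsP p) → ∀ (m : Multiset H),
    (∀ q ∈ m, IsP q) → Associated l.prod m.prod → Multiset.card l = Multiset.card m := by
  classical
  intro l
  induction l using Multiset.induction_on with
  | empty =>
    intro _ m hm hassoc
    rcases m.empty_or_exists_mem with rfl | ⟨q, hq⟩
    · rfl
    · exfalso
      simp only [Multiset.prod_zero] at hassoc
      exact (hm q hq).1 (isUnit_of_dvd_unit (Multiset.dvd_prod hq)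
        (associated_one_iff_isUnit.mp hassoc.symm))
  | cons p l ih =>
    intro hl m hm hassoc
    rw [Multiset.prod_cons] at hassoc
    have hp := hl p (Multiset.mem_cons_self p l)
    have hpm : p ∣ m.prod := dvd_trans (dvd_mul_right p l.prod) hassoc.dvd
    obtain ⟨q, hq, hpq⟩ := hp.dvd_prod hpm
    have hassocpq : Associated p q := hp.assoc (hm q hq) hpq
    have hmm : m.prod = q * (m.erase q).prod := by
      rw [← Multiset.prod_cons, Multiset.cons_erase hq]
    have hprod : Associated (p * l.prod) (p * (m.erase q).prod) := by
      refine hassoc.trans ?_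
      rw [hmm]
      exact hassocpq.symm.mul_right _
    have htail := ih (fun r hr => hl r (Multiset.mem_cons_of_mem hr)) (m.erase q)
      (fun r hr => hm r (Multiset.mem_of_mem_erase hr)) (assoc_cancel hprod)
    have hpos : 0 < Multiset.card m := Multiset.card_pos_iff_exists_mem.mpr ⟨q, hq⟩
    rw [Multiset.card_cons, htail, Multiset.card_erase_of_mem hq]
    exact Nat.succ_pred_eq_of_pos hpos

theorem unq_aux : ∀ (l : Multiset H), (∀ p ∈ l, IsP p) → ∀ b c b' c' : H,
    b = l.prod → Squarefree c → Squarefree c' → b ^ 2 * c = b' ^ 2 * c' →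
    Associated b b' ∧ Associated c c' := by
  intro l
  induction l using Multiset.induction_on with
  | empty =>
    intro _ b c b' c' hb hc hc' heq
    simp only [Multiset.prod_zero] at hb
    subst hb
    rw [one_pow, one_mul] at heq
    have hb'u : IsUnit b' := hc b' ⟨c', by rw [heq, pow_two]⟩
    refine ⟨(associated_one_iff_isUnit.mpr hb'u).symm, ?_⟩
    obtain ⟨u, hu⟩ := hb'u.pow 2
    exact Associated.symm ⟨u, by rw [mul_comm, hu, heq]⟩
  | cons p l ih =>
    intro hl b c b' c' hb hc hc' heq
    rw [Multiset.prod_cons] at hb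
    have hp := hl p (Multiset.mem_cons_self p l)
    set b1 := l.prod with hb1
    have hpb' : p ∣ b' := by
      by_contra hpb'
      have hpb'2 : ¬ p ∣ b' ^ 2 := fun h => hpb' (hp.dvd_of_dvd_pow h)
      have hpp : p * p ∣ b' ^ 2 * c' := by
        refine ⟨b1 ^ 2 * c, ?_⟩
        rw [← heq, hb, mul_pow, pow_two p]; ac_rfl
      have hpc' : p ∣ c' := by
        rcases hp.2 _ _ ((dvd_mul_right p p).trans hpp) with h | h
        · exact absurd h hpb'2
        · exact h
      obtain ⟨d, hd⟩ := hpc'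
      obtain ⟨w, hw⟩ := hpp
      have hw' : p * (b' ^ 2 * d) = p * (p * w) := by
        calc p * (b' ^ 2 * d) = b' ^ 2 * (p * d) := by ac_rfl
          _ = p * p * w := by rw [← hd, hw]
          _ = p * (p * w) := by rw [mul_assoc]
      rcases hp.2 _ _ (⟨w, mul_left_cancel hw'⟩ : p ∣ b' ^ 2 * d) with h | h
      · exact hpb'2 h
      · obtain ⟨e, he⟩ := h
        exact hp.1 (hc' p ⟨e, by rw [hd, he, mul_assoc]⟩)
    obtain ⟨b1', hb1'⟩ := hpb'
    have heq2 : b1 ^ 2 * c = b1' ^ 2 * c' := by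
      have : (p * p) * (b1 ^ 2 * c) = (p * p) * (b1' ^ 2 * c') := by
        calc (p * p) * (b1 ^ 2 * c) = b ^ 2 * c := by rw [hb, mul_pow, pow_two p]; ac_rfl
          _ = b' ^ 2 * c' := heq
          _ = (p * p) * (b1' ^ 2 * c') := by rw [hb1', mul_pow, pow_two p]; ac_rfl
      exact mul_left_cancel this
    obtain ⟨h1, h2⟩ := ih (fun r hr => hl r (Multiset.mem_cons_of_mem hr)) b1 c b1' c' rfl hc hc' heq2
    refine ⟨?_, h2⟩
    rw [hb, hb1']
    exact h1.mul_left p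

include hfact in
theorem unq {b c b' c' : H} (hc : Squarefree c) (hc' : Squarefree c')
    (heq : b ^ 2 * c = b' ^ 2 * c') : Associated b b' ∧ Associated c c' := by
  rcases hfact b with hu | ⟨l, hl, hprod⟩
  · have hbc : Associated c (b ^ 2 * c) := by
      obtain ⟨u, hu2⟩ := hu.pow (n := 2)
      exact ⟨u, by rw [mul_comm, hu2]⟩
    obtain ⟨h1, h2⟩ := unq_aux 0 (by simp) 1 (b ^ 2 * c) b' c' (by simp)
      (sf_assoc hbc hc) hc' (by rw [one_pow, one_mul]; exact heq)
    refine ⟨(associated_one_iff_isUnit.mpr hu).trans h1, ?_⟩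
    exact hbc.trans h2
  · exact unq_aux l hl b c b' c' hprod.symm hc hc' heq

variable {M : Submonoid H}

include hfact in
theorem sqdecomp_k
    (hA : ∀ a ∈ M, ¬ Squarefree a → ∃ b c : H, b ∈ M ∧ c ∈ M ∧ ¬ IsUnit b ∧ a = b ^ 2 * c) :
    ∀ k : ℕ, ∀ (l : Multiset H) (a : H), (∀ p ∈ l, IsP p) → l.prod = a →
    Multiset.card l ≤ k → a ∈ M →
    ∃ B c : H, B ∈ M ∧ c ∈ M ∧ Squarefree c ∧ a = B ^ 2 * c := by
  intro k
  induction k with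
  | zero =>
    intro l a hl hprod hcard ha
    rw [Nat.le_zero, Multiset.card_eq_zero] at hcard
    subst hcard
    simp only [Multiset.prod_zero] at hprod
    exact ⟨1, a, M.one_mem, ha, hprod ▸ squarefree_one, by rw [one_pow, one_mul]⟩
  | succ k ih =>
    intro l a hl hprod hcard ha
    by_cases hsa : Squarefree a
    · exact ⟨1, a, M.one_mem, ha, hsa, by rw [one_pow, one_mul]⟩
    obtain ⟨b, c, hb, hc, hbu, heq⟩ := hA a ha hsa
    rcases hfact b with hub | ⟨lb, hlb, hlbp⟩
    · exact absurd hub hbu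
    rcases hfact c with huc | ⟨lc, hlc, hlcp⟩
    · exact ⟨b, c, hb, hc, huc.squarefree, heq⟩
    have hlbne : lb ≠ 0 := by
      rintro rfl
      simp only [Multiset.prod_zero] at hlbp
      exact hbu (hlbp ▸ isUnit_one)
    have hcards : Multiset.card l = Multiset.card lb + Multiset.card lb + Multiset.card lc := by
      have := card_unique l hl (lb + lb + lc) (by
        intro r hr
        simp only [Multiset.mem_add] at hr
        rcases hr with (hr | hr) | hr
        · exact hlb r hr
        · exact hlb r hr
        · exact hlc r hr)
        (by rw [hprod, Multiset.prod_add, Multiset.prod_add, hlbp, hlcp, heq, pow_two])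
      simpa using this
    have hlbpos : 1 ≤ Multiset.card lb := by
      rcases Multiset.exists_mem_of_ne_zero hlbne with ⟨r, hr⟩
      exact Multiset.card_pos_iff_exists_mem.mpr ⟨r, hr⟩
    obtain ⟨B', c2, hB', hc2, hsc2, heqc⟩ := ih lc c hlc hlcp (by omega) hc
    refine ⟨b * B', c2, M.mul_mem hb hB', hc2, hsc2, ?_⟩
    rw [heq, heqc, mul_pow]; ac_rfl

include hfact in
theorem sqdecomp
    (hA : ∀ a ∈ M, ¬ Squarefree a → ∃ b c : H, b ∈ M ∧ c ∈ M ∧ ¬ IsUnit b ∧ a = b ^ 2 * c)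
    {a : H} (ha : a ∈ M) :
    ∃ B c : H, B ∈ M ∧ c ∈ M ∧ Squarefree c ∧ a = B ^ 2 * c := by
  rcases hfact a with hu | ⟨l, hl, hprod⟩
  · exact ⟨1, a, M.one_mem, ha, hu.squarefree, by rw [one_pow, one_mul]⟩
  · exact sqdecomp_k hfact hA (Multiset.card l) l a hl hprod le_rfl ha

theorem pair_even (f : ℕ → H) : ∀ m : ℕ,
    ∏ i ∈ Finset.range (2 * m), f i = ∏ j ∈ Finset.range m, (f (2 * j) * f (2 * j + 1)) := by
  intro m
  induction m with
  | zero => simp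
  | succ m ih =>
    have h2 : 2 * (m + 1) = (2 * m + 1) + 1 := by ring
    rw [h2, Finset.prod_range_succ, Finset.prod_range_succ, Finset.prod_range_succ, ih,
      mul_assoc]

theorem pair_odd (f : ℕ → H) : ∀ m : ℕ,
    ∏ i ∈ Finset.range (2 * m + 1), f i
      = f 0 * ∏ j ∈ Finset.range m, (f (2 * j + 1) * f (2 * j + 2)) := by
  intro m
  induction m with
  | zero => simp
  | succ m ih =>
    have h2 : 2 * (m + 1) + 1 = (2 * m + 1 + 1) + 1 := by ring
    rw [h2, Finset.prod_range_succ, Finset.prod_range_succ, ih, Finset.prod_range_succ]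
    ac_rfl

theorem prod_move {f g : ℕ → H} {N j : ℕ} {x : H} (hj : j + 1 < N)
    (hfg : ∀ i, i ≠ j → i ≠ j + 1 → g i = f i)
    (hkey : g j * g (j + 1) = x * (f j * f (j + 1))) :
    ∏ i ∈ Finset.range N, g i = x * ∏ i ∈ Finset.range N, f i := by
  classical
  have h1 : j ∈ Finset.range N := by simp; omega
  have h2 : j + 1 ∈ (Finset.range N).erase j := by
    rw [Finset.mem_erase]
    constructor
    · omega
    · simp; omega
  rw [← Finset.mul_prod_erase _ g h1, ← Finset.mul_prod_erase _ g h2,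
    ← Finset.mul_prod_erase _ f h1, ← Finset.mul_prod_erase _ f h2]
  have h3 : ∏ i ∈ ((Finset.range N).erase j).erase (j + 1), g i
      = ∏ i ∈ ((Finset.range N).erase j).erase (j + 1), f i := by
    refine Finset.prod_congr rfl ?_
    intro i hi
    rw [Finset.mem_erase, Finset.mem_erase] at hi
    exact hfg i hi.2.1 hi.1
  rw [h3]
  set P := ∏ i ∈ ((Finset.range N).erase j).erase (j + 1), f i
  calc g j * (g (j + 1) * P) = (g j * g (j + 1)) * P := by rw [mul_assoc]
    _ = (x * (f j * f (j + 1))) * P := by rw [hkey]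
    _ = x * (f j * (f (j + 1) * P)) := by ac_rfl

include hfact in
theorem decomp_ex : ∀ (l : Multiset H), (∀ p ∈ l, IsP p) →
    ∃ (n : ℕ) (s : ℕ → H), (∀ i, Squarefree (s i)) ∧
      (∀ i j, i ≠ j → IsRelPrime (s i) (s j)) ∧
      (∀ i, i = 0 ∨ n < i → s i = 1) ∧
      ∏ i ∈ Finset.range (n + 1), s i ^ i = l.prod := by
  intro l
  induction l using Multiset.induction_on with
  | empty =>
    intro _
    exact ⟨0, fun _ => 1, fun _ => squarefree_one, fun _ _ _ => isRelPrime_one_left,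
      fun _ _ => rfl, by simp⟩
  | cons p l ihl =>
    intro hl
    have hp : IsP p := hl p (Multiset.mem_cons_self p l)
    obtain ⟨n, s, hsf, hcop, htail, hprod⟩ := ihl (fun r hr => hl r (Multiset.mem_cons_of_mem hr))
    have hs0 : s 0 = 1 := htail 0 (Or.inl rfl)
    by_cases hex : ∃ j, p ∣ s j
    · obtain ⟨j, hj⟩ := hex
      have hj0 : j ≠ 0 := by
        rintro rfl
        rw [hs0] at hj
        exact hp.1 (isUnit_of_dvd_one hj)
      have hjn : j ≤ n := by
        by_contra h
        rw [htail j (Or.inr (by omega))] at hj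
        exact hp.1 (isUnit_of_dvd_one hj)
      have huniq : ∀ k, k ≠ j → ¬ p ∣ s k := fun k hk hdk => hp.1 (hcop k j hk hdk hj)
      obtain ⟨y, hy⟩ := hj
      have hys : y ∣ s j := ⟨p, by rw [hy, mul_comm]⟩
      have hpy : ¬ p ∣ y := by
        rintro ⟨z, hz⟩
        exact hp.1 (hsf j p ⟨z, by rw [hy, hz, mul_assoc]⟩)
      have hpj1 : ¬ p ∣ s (j + 1) := huniq (j + 1) (by omega)
      refine ⟨n + 1, fun i => if i = j then y else if i = j + 1 then p * s (j + 1) else s i,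
        ?_, ?_, ?_, ?_⟩
      · intro i
        by_cases h1 : i = j
        · simp only [h1, if_pos rfl]
          exact (hsf j).squarefree_of_dvd hys
        · by_cases h2 : i = j + 1
          · simp only [if_neg h1, h2, if_pos rfl, if_neg (by omega : j + 1 ≠ j)]
            exact sqmul hfact hp.squarefree (hsf (j + 1)) (hp.relprime_of_not_dvd hpj1)
          · simp only [if_neg h1, if_neg h2]
            exact hsf i
      · intro i k hik
        refine relprime_of_no_common hfact ?_
        intro q hq hqi hqk
        have hqp_imp : q ∣ p → p ∣ q := fun h => ((hq.assoc hp h).symm).dvd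
        have hqsj : q ∣ y → q ∣ s j := fun h => h.trans hys
        have analyze : ∀ m, q ∣ (if m = j then y else if m = j + 1 then p * s (j + 1) else s m) →
            (m = j ∧ q ∣ y) ∨ (m = j + 1 ∧ (q ∣ p ∨ q ∣ s (j + 1))) ∨
              (m ≠ j ∧ m ≠ j + 1 ∧ q ∣ s m) := by
          intro m hm
          by_cases h1 : m = j
          · rw [if_pos h1] at hm; exact Or.inl ⟨h1, hm⟩
          by_cases h2 : m = j + 1
          · rw [if_neg h1, if_pos h2] at hm
            exact Or.inr (Or.inl ⟨h2, hq.2 _ _ hm⟩)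
          · rw [if_neg h1, if_neg h2] at hm
            exact Or.inr (Or.inr ⟨h1, h2, hm⟩)
        rcases analyze i hqi with ⟨hi1, hiy⟩ | ⟨hi1, hip⟩ | ⟨hi1, hi2, his⟩ <;>
          rcases analyze k hqk with ⟨hk1, hky⟩ | ⟨hk1, hkp⟩ | ⟨hk1, hk2, hks⟩
        · exact hik (by omega)
        · rcases hkp with h | h
          · exact hpy (hqp_imp h |>.trans hiy)
          · exact hq.1 (hcop j (j + 1) (by omega) (hqsj hiy) h)
        · exact hq.1 (hcop j k (fun hh => hk1 hh.symm) (hqsj hiy) hks)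
        · rcases hip with h | h
          · exact hpy (hqp_imp h |>.trans hky)
          · exact hq.1 (hcop (j + 1) j (by omega) h (hqsj hky))
        · exact hik (by omega)
        · rcases hip with h | h
          · exact huniq k hk1 ((hqp_imp h).trans hks)
          · exact hq.1 (hcop (j + 1) k (fun hh => hk2 hh.symm) h hks)
        · exact hq.1 (hcop i j hi1 his (hqsj hky))
        · rcases hkp with h | h
          · exact huniq i hi1 ((hqp_imp h).trans his)
          · exact hq.1 (hcop i (j + 1) hi2 his h)
        · exact hq.1 (hcop i k hik his hks)
      · intro i hi
        rcases hi with rfl | hi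
        · simp only [if_neg (show ¬(0 = j) from fun h => hj0 h.symm),
            if_neg (show ¬(0 = j + 1) by omega), hs0]
        · simp only [if_neg (show ¬(i = j) by omega), if_neg (show ¬(i = j + 1) by omega)]
          exact htail i (Or.inr (by omega))
      · have hfg : ∀ i, i ≠ j → i ≠ j + 1 →
            ((if i = j then y else if i = j + 1 then p * s (j + 1) else s i) ^ i) = s i ^ i := by
          intro i h1 h2; rw [if_neg h1, if_neg h2]
        have hkey : (if j = j then y else if j = j + 1 then p * s (j + 1) else s j) ^ j *
            ((if j + 1 = j then y else if j + 1 = j + 1 then p * s (j + 1) else s (j + 1)) ^ (j + 1))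
            = p * (s j ^ j * s (j + 1) ^ (j + 1)) := by
          rw [if_pos rfl, if_neg (show ¬(j + 1 = j) by omega), if_pos rfl, hy, mul_pow, mul_pow,
            pow_succ p j]
          ac_rfl
        have hmove := prod_move (f := fun i => s i ^ i)
          (g := fun i => (if i = j then y else if i = j + 1 then p * s (j + 1) else s i) ^ i)
          (N := n + 2) (x := p) (by omega) hfg hkey
        rw [Multiset.prod_cons, ← hprod]
        have htrunc : ∏ i ∈ Finset.range (n + 2), s i ^ i
            = ∏ i ∈ Finset.range (n + 1), s i ^ i := by
          rw [Finset.prod_range_succ, htail (n + 1) (Or.inr (by omega)), one_pow, mul_one]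
        exact hmove.trans (by rw [htrunc])
    · refine ⟨n + 1, fun i => if i = 1 then p * s 1 else s i, ?_, ?_, ?_, ?_⟩
      · intro i
        by_cases h1 : i = 1
        · simp only [h1, if_pos rfl]
          exact sqmul hfact hp.squarefree (hsf 1)
            (hp.relprime_of_not_dvd (fun h => hex ⟨1, h⟩))
        · simp only [if_neg h1]
          exact hsf i
      · intro i k hik
        refine relprime_of_no_common hfact ?_
        intro q hq hqi hqk
        have hqp_imp : q ∣ p → p ∣ q := fun h => ((hq.assoc hp h).symm).dvd
        have analyze : ∀ m, q ∣ (if m = 1 then p * s 1 else s m) →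
            (m = 1 ∧ q ∣ p) ∨ q ∣ s m := by
          intro m hm
          by_cases h1 : m = 1
          · rw [if_pos h1] at hm
            rcases hq.2 _ _ hm with h | h
            · exact Or.inl ⟨h1, h⟩
            · exact Or.inr (by rw [h1]; exact h)
          · rw [if_neg h1] at hm; exact Or.inr hm
        rcases analyze i hqi with ⟨hi1, hip⟩ | his <;> rcases analyze k hqk with ⟨hk1, hkp⟩ | hks
        · exact hik (by omega)
        · exact hex ⟨k, (hqp_imp hip).trans hks⟩
        · exact hex ⟨i, (hqp_imp hkp).trans his⟩
        · exact hq.1 (hcop i k hik his hks)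
      · intro i hi
        rcases hi with rfl | hi
        · simp only [if_neg (show ¬(0 = 1) by omega), hs0]
        · simp only [if_neg (show ¬(i = 1) by omega)]
          exact htail i (Or.inr (by omega))
      · have hfg : ∀ i, i ≠ 0 → i ≠ 0 + 1 →
            ((if i = 1 then p * s 1 else s i) ^ i) = s i ^ i := by
          intro i h1 h2; rw [if_neg (show ¬(i = 1) by omega)]
        have hkey : (if (0 : ℕ) = 1 then p * s 1 else s 0) ^ 0 *
            ((if 0 + 1 = 1 then p * s 1 else s (0 + 1)) ^ (0 + 1))
            = p * (s 0 ^ 0 * s (0 + 1) ^ (0 + 1)) := by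
          norm_num
        have hmove := prod_move (f := fun i => s i ^ i)
          (g := fun i => (if i = 1 then p * s 1 else s i) ^ i)
          (N := n + 2) (x := p) (show 0 + 1 < n + 2 by omega) hfg hkey
        rw [Multiset.prod_cons, ← hprod]
        have htrunc : ∏ i ∈ Finset.range (n + 2), s i ^ i
            = ∏ i ∈ Finset.range (n + 1), s i ^ i := by
          rw [Finset.prod_range_succ, htail (n + 1) (Or.inr (by omega)), one_pow, mul_one]
        exact hmove.trans (by rw [htrunc])

include hfact in
theorem main_ind (hunits : ∀ u : H, IsUnit u → u ∈ M)
    (hA : ∀ a ∈ M, ¬ Squarefree a → ∃ b c : H, b ∈ M ∧ c ∈ M ∧ ¬ IsUnit b ∧ a = b ^ 2 * c) :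
    ∀ n : ℕ, ∀ s : ℕ → H, (∀ i, Squarefree (s i)) → (∀ i j, i ≠ j → IsRelPrime (s i) (s j)) →
    (∀ i, n < i → s i = 1) → (∏ i ∈ Finset.range (n + 1), s i ^ i) ∈ M →
    ∀ i, 1 ≤ i → i ≤ n → s i ∈ M := by
  intro n
  induction n using Nat.strong_induction_on with
  | _ n IH =>
  intro s hsf hcop htail hmem i hi1 hin
  rcases Nat.lt_or_ge n 2 with hn2 | hn2
  · -- n = 1
    have hn1 : n = 1 := by omega
    subst hn1
    have hp2 : ∏ i ∈ Finset.range 2, s i ^ i = s 1 := by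
      rw [Finset.prod_range_succ, Finset.prod_range_one]
      norm_num
    rw [hp2] at hmem
    have hi : i = 1 := by omega
    rw [hi]; exact hmem
  -- n ≥ 2
  obtain ⟨B, c, hB, hc, hsc, heq⟩ := sqdecomp hfact hA hmem
  have ha0 : ∏ i ∈ Finset.range (n + 1), s i ^ i
      = (∏ i ∈ Finset.range (n + 1), s i ^ (i / 2)) ^ 2
        * ∏ i ∈ Finset.range (n + 1), s i ^ (i % 2) := by
    rw [← Finset.prod_pow, ← Finset.prod_mul_distrib]
    refine Finset.prod_congr rfl fun i _ => ?_
    rw [← pow_mul, ← pow_add]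
    congr 1
    omega
  have hsfc0 : Squarefree (∏ i ∈ Finset.range (n + 1), s i ^ (i % 2)) := by
    refine sq_finsetprod hfact (fun i _ => ?_) (fun i _ j _ hij => ?_)
    · rcases Nat.mod_two_eq_zero_or_one i with h | h <;> rw [h]
      · simpa using squarefree_one
      · rw [pow_one]; exact hsf i
    · rcases Nat.mod_two_eq_zero_or_one i with h | h <;>
        rcases Nat.mod_two_eq_zero_or_one j with h' | h' <;> rw [h, h'] <;>
        simp only [pow_zero, pow_one]
      exacts [isRelPrime_one_left, isRelPrime_one_left, isRelPrime_one_right, hcop i j hij]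
  have hun := unq hfact hsfc0 hsc (by rw [← ha0, heq])
  have hB₀ : (∏ i ∈ Finset.range (n + 1), s i ^ (i / 2)) ∈ M :=
    mem_of_assoc hunits hB hun.1.symm
  have hc₀ : (∏ i ∈ Finset.range (n + 1), s i ^ (i % 2)) ∈ M :=
    mem_of_assoc hunits hc hun.2.symm
  -- even-indexed pairs
  have hBeq : ∏ i ∈ Finset.range (n + 1), s i ^ (i / 2)
      = ∏ j ∈ Finset.range (n / 2 + 1), (s (2 * j) * s (2 * j + 1)) ^ j := by
    have hsub : ∏ i ∈ Finset.range (n + 1), s i ^ (i / 2)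
        = ∏ i ∈ Finset.range (2 * (n / 2 + 1)), s i ^ (i / 2) := by
      refine Finset.prod_subset (Finset.range_subset_range.mpr (by omega)) (fun x hx hnx => ?_)
      simp only [Finset.mem_range] at hx hnx
      rw [htail x (by omega), one_pow]
    rw [hsub, pair_even (fun i => s i ^ (i / 2)) (n / 2 + 1)]
    refine Finset.prod_congr rfl fun j _ => ?_
    show s (2 * j) ^ (2 * j / 2) * s (2 * j + 1) ^ ((2 * j + 1) / 2) = _
    rw [show 2 * j / 2 = j by omega, show (2 * j + 1) / 2 = j by omega, mul_pow]
  have hev : ∀ j, 1 ≤ j → j ≤ n / 2 → s (2 * j) * s (2 * j + 1) ∈ M := by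
    have happ := IH (n / 2) (by omega) (fun j => s (2 * j) * s (2 * j + 1))
      (fun j => sqmul hfact (hsf _) (hsf _) (hcop _ _ (by omega)))
      (fun j k hjk => rp_mul_mul hfact (hcop _ _ (by omega)) (hcop _ _ (by omega))
        (hcop _ _ (by omega)) (hcop _ _ (by omega)))
      (fun j hj => by
        show s (2 * j) * s (2 * j + 1) = 1
        rw [htail (2 * j) (by omega), htail (2 * j + 1) (by omega), one_mul])
      (by rw [← hBeq]; exact hB₀)
    exact happ
  -- odd-indexed pairs
  have hDeq : (∏ i ∈ Finset.range (n + 1), s i ^ (i / 2))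
        * (∏ i ∈ Finset.range (n + 1), s i ^ (i % 2))
      = ∏ j ∈ Finset.range ((n + 1) / 2 + 1),
          (if j = 0 then 1 else s (2 * j - 1) * s (2 * j)) ^ j := by
    rw [← Finset.prod_mul_distrib]
    have h1 : ∏ i ∈ Finset.range (n + 1), (s i ^ (i / 2) * s i ^ (i % 2))
        = ∏ i ∈ Finset.range (n + 1), s i ^ ((i + 1) / 2) := by
      refine Finset.prod_congr rfl fun i _ => ?_
      rw [← pow_add]
      congr 1
      omega
    have h2 : ∏ i ∈ Finset.range (n + 1), s i ^ ((i + 1) / 2)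
        = ∏ i ∈ Finset.range (2 * ((n + 1) / 2) + 1), s i ^ ((i + 1) / 2) := by
      refine Finset.prod_subset (Finset.range_subset_range.mpr (by omega)) (fun x hx hnx => ?_)
      simp only [Finset.mem_range] at hx hnx
      rw [htail x (by omega), one_pow]
    rw [h1, h2, pair_odd (fun i => s i ^ ((i + 1) / 2)) ((n + 1) / 2)]
    rw [Finset.prod_range_succ']
    have h3 : (if (0 : ℕ) = 0 then (1 : H) else s (2 * 0 - 1) * s (2 * 0)) ^ 0 = 1 := by
      norm_num
    rw [h3, mul_one]
    norm_num
    refine Finset.prod_congr rfl fun j _ => ?_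
    show (fun i => s i ^ ((i + 1) / 2)) (2 * j + 1) * (fun i => s i ^ ((i + 1) / 2)) (2 * j + 2)
      = (if j + 1 = 0 then 1 else s (2 * (j + 1) - 1) * s (2 * (j + 1))) ^ (j + 1)
    simp only [if_neg (Nat.succ_ne_zero j)]
    rw [show 2 * (j + 1) - 1 = 2 * j + 1 by omega, show 2 * (j + 1) = 2 * j + 2 by omega]
    show s (2 * j + 1) ^ ((2 * j + 1 + 1) / 2) * s (2 * j + 2) ^ ((2 * j + 2 + 1) / 2) = _
    rw [show (2 * j + 1 + 1) / 2 = j + 1 by omega, show (2 * j + 2 + 1) / 2 = j + 1 by omega,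
      mul_pow]
  have hodd : ∀ j, 1 ≤ j → j ≤ (n + 1) / 2 → s (2 * j - 1) * s (2 * j) ∈ M := by
    have hrsf : ∀ j, Squarefree (if j = 0 then (1 : H) else s (2 * j - 1) * s (2 * j)) := by
      intro j
      by_cases hj : j = 0
      · rw [if_pos hj]; exact squarefree_one
      · rw [if_neg hj]
        exact sqmul hfact (hsf _) (hsf _) (hcop _ _ (by omega))
    have hrcop : ∀ j k, j ≠ k → IsRelPrime (if j = 0 then (1 : H) else s (2 * j - 1) * s (2 * j))
        (if k = 0 then (1 : H) else s (2 * k - 1) * s (2 * k)) := by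
      intro j k hjk
      by_cases hj : j = 0
      · rw [if_pos hj]; exact isRelPrime_one_left
      by_cases hk : k = 0
      · rw [if_pos hk]; exact isRelPrime_one_right
      rw [if_neg hj, if_neg hk]
      exact rp_mul_mul hfact (hcop _ _ (by omega)) (hcop _ _ (by omega))
        (hcop _ _ (by omega)) (hcop _ _ (by omega))
    have hrtail : ∀ j, (n + 1) / 2 < j →
        (if j = 0 then (1 : H) else s (2 * j - 1) * s (2 * j)) = 1 := by
      intro j hj
      rw [if_neg (by omega), htail (2 * j - 1) (by omega), htail (2 * j) (by omega), one_mul]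
    have happ := IH ((n + 1) / 2) (by omega)
      (fun j => if j = 0 then (1 : H) else s (2 * j - 1) * s (2 * j))
      hrsf hrcop hrtail (by rw [← hDeq]; exact M.mul_mem hB₀ hc₀)
    intro j hj1 hj2
    have h := happ j hj1 hj2
    simp only [if_neg (show ¬ (j = 0) by omega)] at h
    exact h
  -- consecutive pairs
  have hpairs : ∀ k, 1 ≤ k → k ≤ n → s k * s (k + 1) ∈ M := by
    intro k hk1 hkn
    rcases Nat.even_or_odd k with ⟨j, hj⟩ | ⟨j, hj⟩
    · have h := hev j (by omega) (by omega)
      rwa [show 2 * j = k by omega] at h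
    · have h := hodd (j + 1) (by omega) (by omega)
      rwa [show 2 * (j + 1) - 1 = k by omega, show 2 * (j + 1) = k + 1 by omega] at h
  have hsn : s n ∈ M := by
    have h := hpairs n (by omega) le_rfl
    rwa [htail (n + 1) (by omega), mul_one] at h
  by_cases h3 : n = 2
  · subst h3
    have hc1 : ∏ i ∈ Finset.range 3, s i ^ (i % 2) = s 1 := by
      rw [Finset.prod_range_succ, Finset.prod_range_succ, Finset.prod_range_one]
      norm_num
    have hb1 : ∏ i ∈ Finset.range 3, s i ^ (i / 2) = s 2 := by
      rw [Finset.prod_range_succ, Finset.prod_range_succ, Finset.prod_range_one]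
      norm_num
    have hi12 : i = 1 ∨ i = 2 := by omega
    rcases hi12 with rfl | rfl
    · rw [hc1] at hc₀; exact hc₀
    · rw [hb1] at hB₀; exact hB₀
  · have hn3 : 3 ≤ n := by omega
    have hdown : ∀ d k, k = n - d → 1 ≤ k → s k ∈ M := by
      intro d
      induction d with
      | zero => intro k hk _; rw [hk, Nat.sub_zero]; exact hsn
      | succ d ihd =>
        intro k hk hk1
        by_cases hkn : n ≤ k
        · have : k = n := by omega
          rw [this]; exact hsn
        have hsk1 : s (k + 1) ∈ M := ihd (k + 1) (by omega) (by omega)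
        have hX : (s k * s (k + 1)) * s (k + 1) ∈ M :=
          M.mul_mem (hpairs k hk1 (by omega)) hsk1
        have hprod3 : ∏ j ∈ Finset.range 3,
            (if j = 1 then s k else if j = 2 then s (k + 1) else 1) ^ j
            = (s k * s (k + 1)) * s (k + 1) := by
          rw [Finset.prod_range_succ, Finset.prod_range_succ, Finset.prod_range_one]
          norm_num
          rw [pow_two, mul_assoc]
        have husf : ∀ j, Squarefree (if j = 1 then s k else if j = 2 then s (k + 1) else 1) := by
          intro j
          by_cases h1 : j = 1
          · rw [if_pos h1]; exact hsf k
          by_cases h2 : j = 2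
          · rw [if_neg h1, if_pos h2]; exact hsf (k + 1)
          · rw [if_neg h1, if_neg h2]; exact squarefree_one
        have hucop : ∀ j j', j ≠ j' →
            IsRelPrime (if j = 1 then s k else if j = 2 then s (k + 1) else 1)
              (if j' = 1 then s k else if j' = 2 then s (k + 1) else 1) := by
          intro j j' hjj'
          by_cases h1 : j = 1
          · rw [if_pos h1]
            by_cases h2 : j' = 1
            · omega
            rw [if_neg h2]
            by_cases h3 : j' = 2
            · rw [if_pos h3]; exact hcop k (k + 1) (by omega)
            · rw [if_neg h3]; exact isRelPrime_one_right
          rw [if_neg h1]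
          by_cases h2 : j = 2
          · rw [if_pos h2]
            by_cases h3 : j' = 1
            · rw [if_pos h3]; exact hcop (k + 1) k (by omega)
            rw [if_neg h3]
            by_cases h4 : j' = 2
            · omega
            · rw [if_neg h4]; exact isRelPrime_one_right
          · rw [if_neg h2]; exact isRelPrime_one_left
        have hutail : ∀ j, 2 < j →
            (if j = 1 then s k else if j = 2 then s (k + 1) else 1) = 1 := by
          intro j hj
          rw [if_neg (by omega), if_neg (by omega)]
        have happ := IH 2 (by omega)
          (fun j => if j = 1 then s k else if j = 2 then s (k + 1) else 1)
          husf hucop hutail (by rw [hprod3]; exact hX) 1 le_rfl (by omega)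
        norm_num at happ
        exact happ
    exact hdown (n - i) i (by omega) hi1

end SF11

open SF11 in
theorem stmt_11 {H : Type*} [CancelCommMonoid H]
    (hfact : ∀ a : H, IsUnit a ∨ ∃ l : Multiset H, (∀ p ∈ l, ¬ IsUnit p ∧ ∀ b c : H, p ∣ b * c → p ∣ b ∨ p ∣ c) ∧ l.prod = a)
    (M : Submonoid H) (hunits : ∀ u : H, IsUnit u → u ∈ M) :
    (∀ a ∈ M, (¬ ∃ b c : H, b ∈ M ∧ c ∈ M ∧ ¬ IsUnit b ∧ a = b ^ 2 * c) →
      Squarefree a) ↔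
    (∀ n : ℕ, 1 ≤ n → ∀ s : Fin n → H, (∀ i, Squarefree (s i)) →
      (∀ i j, i ≠ j → IsRelPrime (s i) (s j)) →
      (∏ i, (s i) ^ (i.val + 1)) ∈ M → ∀ i, s i ∈ M) := by
  have hfact' : ∀ a : H, IsUnit a ∨ ∃ l : Multiset H, (∀ p ∈ l, IsP p) ∧ l.prod = a := hfact
  constructor
  · intro hL n hn s hsf hcop hmem i
    have hA : ∀ a ∈ M, ¬ Squarefree a →
        ∃ b c : H, b ∈ M ∧ c ∈ M ∧ ¬ IsUnit b ∧ a = b ^ 2 * c := by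
      intro a ha hns
      by_contra hno
      exact hns (hL a ha hno)
    obtain ⟨sN, hdef⟩ : ∃ sN : ℕ → H, ∀ k,
        sN k = if h : 1 ≤ k ∧ k ≤ n then s ⟨k - 1, by omega⟩ else 1 :=
      ⟨fun k => if h : 1 ≤ k ∧ k ≤ n then s ⟨k - 1, by omega⟩ else 1, fun k => rfl⟩
    have hsfN : ∀ k, Squarefree (sN k) := by
      intro k
      rw [hdef k]
      by_cases h : 1 ≤ k ∧ k ≤ n
      · rw [dif_pos h]; exact hsf _
      · rw [dif_neg h]; exact squarefree_one
    have hcopN : ∀ k k', k ≠ k' → IsRelPrime (sN k) (sN k') := by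
      intro k k' hkk'
      rw [hdef k, hdef k']
      by_cases h : 1 ≤ k ∧ k ≤ n
      · rw [dif_pos h]
        by_cases h' : 1 ≤ k' ∧ k' ≤ n
        · rw [dif_pos h']
          refine hcop _ _ ?_
          intro hf
          apply hkk'
          have := congrArg Fin.val hf
          simp only at this
          omega
        · rw [dif_neg h']; exact isRelPrime_one_right
      · rw [dif_neg h]; exact isRelPrime_one_left
    have htailN : ∀ k, n < k → sN k = 1 := by
      intro k hk
      rw [hdef k, dif_neg (by omega)]
    have hconv : ∏ k ∈ Finset.range (n + 1), sN k ^ k = ∏ i : Fin n, s i ^ (i.val + 1) := by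
      rw [Finset.prod_range_succ']
      rw [hdef 0, dif_neg (by omega), one_pow, mul_one]
      rw [← Fin.prod_univ_eq_prod_range (fun k => sN (k + 1) ^ (k + 1)) n]
      refine Finset.prod_congr rfl fun i _ => ?_
      have hi := i.isLt
      rw [hdef (i.val + 1), dif_pos (by omega : 1 ≤ i.val + 1 ∧ i.val + 1 ≤ n)]
      congr 2
    have hi := i.isLt
    have happly := main_ind hfact' hunits hA n sN hsfN hcopN htailN
      (by rw [hconv]; exact hmem) (i.val + 1) (by omega) (by omega)
    have heqi : sN (i.val + 1) = s i := by
      rw [hdef (i.val + 1), dif_pos (by omega : 1 ≤ i.val + 1 ∧ i.val + 1 ≤ n)]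
      congr 1
    rwa [heqi] at happly
  · intro hR a ha
    intro hnosq
    intro x hxx
    by_contra hx
    obtain ⟨p, hp, hpx⟩ := exists_pfactor hfact' hx
    have hppa : p * p ∣ a := (mul_dvd_mul hpx hpx).trans hxx
    rcases hfact' a with hua | ⟨l, hl, hprod⟩
    · exact hp.1 (isUnit_of_dvd_unit ((dvd_mul_right p p).trans hppa) hua)
    obtain ⟨n, s, hsf, hcop, htail, hprodeq⟩ := decomp_ex hfact' l hl
    have hs0 : s 0 = 1 := htail 0 (Or.inl rfl)
    have haeq : ∏ i ∈ Finset.range (n + 1), s i ^ i = a := by rw [hprodeq, hprod]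
    have hpa : p ∣ a := (dvd_mul_right p p).trans hppa
    obtain ⟨j, hjr, hpjp⟩ := hp.dvd_finsetprod (show p ∣ ∏ i ∈ Finset.range (n + 1), s i ^ i by
      rw [haeq]; exact hpa)
    have hpj : p ∣ s j := hp.dvd_of_dvd_pow hpjp
    simp only [Finset.mem_range] at hjr
    have hj0 : j ≠ 0 := by
      rintro rfl
      rw [hs0] at hpj
      exact hp.1 (isUnit_of_dvd_one hpj)
    have huniqp : ∀ k, k ≠ j → ¬ p ∣ s k := fun k hk h => hp.1 (hcop k j hk h hpj)
    have hj2 : 2 ≤ j := by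
      by_contra hlt
      have hj1 : j = 1 := by omega
      subst hj1
      obtain ⟨y, hy⟩ := hpj
      have hpy : ¬ p ∣ y := by
        rintro ⟨z, hz⟩
        exact hp.1 (hsf 1 p ⟨z, by rw [hy, hz, mul_assoc]⟩)
      have h1mem : (1 : ℕ) ∈ Finset.range (n + 1) := by simp; omega
      have hsplit : a = s 1 ^ 1 * ∏ k ∈ (Finset.range (n + 1)).erase 1, s k ^ k := by
        rw [← haeq, ← Finset.mul_prod_erase (Finset.range (n + 1)) (fun k => s k ^ k) h1mem]
      have hpR : ¬ p ∣ ∏ k ∈ (Finset.range (n + 1)).erase 1, s k ^ k := by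
        intro h
        obtain ⟨k, hk, hpk⟩ := hp.dvd_finsetprod h
        rw [Finset.mem_erase] at hk
        exact huniqp k hk.1 (hp.dvd_of_dvd_pow hpk)
      obtain ⟨w, hw⟩ := hppa
      have heq2 : p * (y * ∏ k ∈ (Finset.range (n + 1)).erase 1, s k ^ k) = p * (p * w) := by
        calc p * (y * ∏ k ∈ (Finset.range (n + 1)).erase 1, s k ^ k)
            = (p * y) * ∏ k ∈ (Finset.range (n + 1)).erase 1, s k ^ k := by rw [mul_assoc]
          _ = s 1 ^ 1 * ∏ k ∈ (Finset.range (n + 1)).erase 1, s k ^ k := by rw [pow_one, hy]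
          _ = a := hsplit.symm
          _ = p * p * w := hw
          _ = p * (p * w) := by rw [mul_assoc]
      rcases hp.2 _ _ (⟨w, mul_left_cancel heq2⟩ :
          p ∣ y * ∏ k ∈ (Finset.range (n + 1)).erase 1, s k ^ k) with h | h
      · exact hpy h
      · exact hpR h
    have hn1 : 1 ≤ n := by omega
    have hconv : ∏ i : Fin n, s (i.val + 1) ^ (i.val + 1)
        = ∏ k ∈ Finset.range (n + 1), s k ^ k := by
      rw [Finset.prod_range_succ', hs0, one_pow, mul_one]
      exact Fin.prod_univ_eq_prod_range (fun k => s (k + 1) ^ (k + 1)) n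
    have hsM : ∀ i : Fin n, s (i.val + 1) ∈ M := by
      refine hR n hn1 (fun i : Fin n => s (i.val + 1)) (fun i => hsf _) ?_ ?_
      · intro i' j' hij'
        refine hcop _ _ ?_
        intro hf
        exact hij' (Fin.ext (by omega))
      · rw [hconv, haeq]; exact ha
    have hall : ∀ k, 1 ≤ k → k ≤ n → s k ∈ M := by
      intro k h1 h2
      have h := hsM ⟨k - 1, by omega⟩
      simpa only [show k - 1 + 1 = k by omega] using h
    refine hnosq ⟨∏ k ∈ Finset.range (n + 1), s k ^ (k / 2),
      ∏ k ∈ Finset.range (n + 1), s k ^ (k % 2), ?_, ?_, ?_, ?_⟩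
    · refine Submonoid.prod_mem M ?_
      intro k hk
      simp only [Finset.mem_range] at hk
      by_cases hk0 : k = 0
      · subst hk0; rw [hs0, one_pow]; exact M.one_mem
      · exact pow_mem (hall k (by omega) (by omega)) _
    · refine Submonoid.prod_mem M ?_
      intro k hk
      simp only [Finset.mem_range] at hk
      by_cases hk0 : k = 0
      · subst hk0; rw [hs0, one_pow]; exact M.one_mem
      · exact pow_mem (hall k (by omega) (by omega)) _
    · intro hub
      have hdvd1 : s j ∣ ∏ k ∈ Finset.range (n + 1), s k ^ (k / 2) := by
        refine dvd_trans (dvd_pow_self (s j) (show j / 2 ≠ 0 by omega)) ?_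
        exact Finset.dvd_prod_of_mem _ (by simp; omega)
      exact hp.1 (isUnit_of_dvd_unit (hpj.trans hdvd1) hub)
    · rw [← haeq, ← Finset.prod_pow, ← Finset.prod_mul_distrib]
      refine Finset.prod_congr rfl fun k _ => ?_
      rw [← pow_mul, ← pow_add]
      congr 1
      omega
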